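/- Let Γ be a diagonal nonsingular M×M complex matrix with diagonal entries γ1,…,γM of positive modulus. Then there exists an M×M unitary matrix S such that Γ·S = Q·R with Q unitary and R upper triangular with all diagonal entries equal to (∏_{k=1}^M |γ_k|)^{1/M}. -/

import Mathlib

open Matrix
set_option maxHeartbeats 1000000

noncomputable section

def uCol (m : ℕ) : Matrix (Fin (m+1)) (Fin 1) ℂ :=
  Matrix.of fun i _ => if i = 0 then 1 else 0

lemma uCol_conjTranspose (m : ℕ) :
    (uCol m)ᴴ = Matrix.of fun (_ : Fin 1) (j : Fin (m+1)) => if j = 0 then (1:ℂ) else 0 := by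
  ext i j
  simp [uCol, conjTranspose_apply]

lemma vu (m : ℕ) : (uCol m)ᴴ * uCol m = 1 := by
  ext i j
  rw [uCol_conjTranspose]
  simp [Matrix.mul_apply, uCol, Matrix.one_apply, Subsingleton.elim i j]

lemma uv (m : ℕ) : uCol m * (uCol m)ᴴ
    = Matrix.diagonal (fun k => if k = 0 then (1:ℂ) else 0) := by
  ext i j
  rw [uCol_conjTranspose]
  simp [Matrix.mul_apply, uCol, Matrix.diagonal_apply]
  split <;> split <;> simp_all

lemma diag_mul_u (m : ℕ) (f : Fin (m+1) → ℂ) :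
    Matrix.diagonal f * uCol m = f 0 • uCol m := by
  ext i j
  simp [Matrix.diagonal_mul, uCol]
  split <;> simp_all

lemma v_mul_diag (m : ℕ) (f : Fin (m+1) → ℂ) :
    (uCol m)ᴴ * Matrix.diagonal f = f 0 • (uCol m)ᴴ := by
  ext i j
  rw [uCol_conjTranspose]
  simp [Matrix.mul_diagonal, uCol]
  split <;> simp_all [mul_comm]

lemma diag_one_const (x : ℂ) :
    Matrix.diagonal (fun _ : Fin 1 => x) = x • (1 : Matrix (Fin 1) (Fin 1) ℂ) := by
  ext i j
  simp [Matrix.diagonal_apply, Matrix.one_apply, Subsingleton.elim i j]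

lemma rot_exists (a b c : ℝ) (ha : 0 ≤ a) (hac : a ≤ c) (hcb : c ≤ b) :
    ∃ co si : ℝ, co^2 + si^2 = 1 ∧ a^2*co^2 + b^2*si^2 = c^2 := by
  rcases eq_or_lt_of_le (hac.trans hcb) with h | h
  · refine ⟨1, 0, by ring, ?_⟩
    have hca : c = a := le_antisymm (h ▸ hcb) hac
    rw [hca]; ring
  · have hb2 : 0 < b^2 - a^2 := by nlinarith
    set t := (c^2 - a^2)/(b^2 - a^2) with ht
    have ht0 : 0 ≤ t := div_nonneg (by nlinarith) hb2.le
    have ht1 : t ≤ 1 := by rw [div_le_one hb2]; nlinarith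
    refine ⟨Real.sqrt (1 - t), Real.sqrt t, ?_, ?_⟩
    · rw [Real.sq_sqrt (by linarith), Real.sq_sqrt ht0]; ring
    · rw [Real.sq_sqrt (by linarith), Real.sq_sqrt ht0, ht]
      field_simp
      ring

lemma step_blocks (m : ℕ) (a c : ℝ) (d' : Fin (m+1) → ℝ)
    (ha : 0 < a) (hc : 0 < c) (hd' : ∀ k, 0 < d' k)
    (hac : a ≤ c) (hcb : c ≤ d' 0)
    (S' Q' R' : Matrix (Fin (m+1)) (Fin (m+1)) ℂ)
    (hS' : S'ᴴ * S' = 1) (hQ' : Q'ᴴ * Q' = 1)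
    (hEq' : Matrix.diagonal
        (fun k => if k = 0 then (a:ℂ) * (d' 0 : ℂ) / (c:ℂ) else (d' k : ℂ)) * S'
      = Q' * R') :
    ∃ S₀ Q₀ : Matrix (Fin 1 ⊕ Fin (m+1)) (Fin 1 ⊕ Fin (m+1)) ℂ,
      ∃ B : Matrix (Fin 1) (Fin (m+1)) ℂ,
      S₀ᴴ * S₀ = 1 ∧ Q₀ᴴ * Q₀ = 1 ∧
      Matrix.diagonal (Sum.elim (fun _ => (a:ℂ)) (fun k => (d' k : ℂ))) * S₀
        = Q₀ * Matrix.fromBlocks ((c:ℂ) • 1) B 0 R' := by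
  have hb : 0 < d' 0 := hd' 0
  set b : ℝ := d' 0 with hbdef
  obtain ⟨co, si, h1, h2⟩ := rot_exists a b c ha.le hac hcb
  have hc0 : (c:ℝ) ≠ 0 := hc.ne'
  have hH1 : ((co:ℂ))^2 + ((si:ℂ))^2 = 1 := by exact_mod_cast h1
  have hH2 : ((a:ℂ))^2*((co:ℂ))^2 + ((b:ℂ))^2*((si:ℂ))^2 = ((c:ℂ))^2 := by exact_mod_cast h2
  have hcC : ((c:ℂ)) ≠ 0 := by exact_mod_cast hc0
  set E1 : Matrix (Fin (m+1)) (Fin (m+1)) ℂ :=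
    Matrix.diagonal (fun k => if k = 0 then ((co:ℂ)) else 1) with hE1
  set F1 : Matrix (Fin (m+1)) (Fin (m+1)) ℂ :=
    Matrix.diagonal (fun k => if k = 0 then (a:ℂ)*(co:ℂ)/(c:ℂ) else 1) with hF1
  set Dd : Matrix (Fin (m+1)) (Fin (m+1)) ℂ :=
    Matrix.diagonal (fun k => if k = 0 then (a:ℂ)*(b:ℂ)/(c:ℂ) else (d' k : ℂ)) with hDd
  set S₁ := Matrix.fromBlocks ((co:ℂ) • (1 : Matrix (Fin 1) (Fin 1) ℂ)) (-(si:ℂ) • (uCol m)ᴴ)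
    ((si:ℂ) • uCol m) E1 with hS₁def
  set Q₁ := Matrix.fromBlocks (((a:ℂ)*(co:ℂ)/(c:ℂ)) • (1 : Matrix (Fin 1) (Fin 1) ℂ))
    (-((b:ℂ)*(si:ℂ)/(c:ℂ)) • (uCol m)ᴴ) (((b:ℂ)*(si:ℂ)/(c:ℂ)) • uCol m) F1 with hQ₁def
  set T₁ := Matrix.fromBlocks ((c:ℂ) • (1 : Matrix (Fin 1) (Fin 1) ℂ))
    ((((b:ℂ)^2-(a:ℂ)^2)*(si:ℂ)*(co:ℂ)/(c:ℂ)) • (uCol m)ᴴ)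
    (0 : Matrix (Fin (m+1)) (Fin 1) ℂ) Dd with hT₁def
  -- conjTranspose computations
  have hE1H : E1ᴴ = E1 := by
    rw [hE1, Matrix.diagonal_conjTranspose]
    apply congrArg Matrix.diagonal
    funext k
    by_cases hk : k = 0 <;> simp [hk, Complex.star_def, Complex.conj_ofReal]
  have hF1H : F1ᴴ = F1 := by
    rw [hF1, Matrix.diagonal_conjTranspose]
    apply congrArg Matrix.diagonal
    funext k
    by_cases hk : k = 0 <;>
      simp [hk, Complex.star_def, map_div₀, Complex.conj_ofReal]
  have hS₁H : S₁ᴴ = Matrix.fromBlocks ((co:ℂ) • (1 : Matrix (Fin 1) (Fin 1) ℂ))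
      ((si:ℂ) • (uCol m)ᴴ) (-(si:ℂ) • uCol m) E1 := by
    rw [hS₁def, Matrix.fromBlocks_conjTranspose, hE1H]
    congr 1 <;>
      simp [Matrix.conjTranspose_smul, Complex.star_def, Complex.conj_ofReal]
  have hQ₁H : Q₁ᴴ = Matrix.fromBlocks (((a:ℂ)*(co:ℂ)/(c:ℂ)) • (1 : Matrix (Fin 1) (Fin 1) ℂ))
      (((b:ℂ)*(si:ℂ)/(c:ℂ)) • (uCol m)ᴴ) (-((b:ℂ)*(si:ℂ)/(c:ℂ)) • uCol m) F1 := by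
    rw [hQ₁def, Matrix.fromBlocks_conjTranspose, hF1H]
    congr 1 <;>
      simp [Matrix.conjTranspose_smul, Complex.star_def, map_div₀, Complex.conj_ofReal]
  have hS₁U : S₁ᴴ * S₁ = 1 := by
    rw [hS₁H, hS₁def, Matrix.fromBlocks_multiply, ← Matrix.fromBlocks_one,
      Matrix.fromBlocks_inj]
    refine ⟨?_, ?_, ?_, ?_⟩
    · simp only [hE1, Matrix.neg_mul, Matrix.mul_neg, Matrix.smul_mul, Matrix.mul_smul,
        Matrix.mul_one, Matrix.one_mul, Matrix.mul_zero, Matrix.zero_mul, smul_zero,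
        add_zero, zero_add, smul_smul, vu, uv, v_mul_diag, diag_mul_u, reduceIte,
        Matrix.diagonal_mul_diagonal]
      match_scalars
      · linear_combination hH1
    · simp only [hE1, Matrix.neg_mul, Matrix.mul_neg, Matrix.smul_mul, Matrix.mul_smul,
        Matrix.mul_one, Matrix.one_mul, Matrix.mul_zero, Matrix.zero_mul, smul_zero,
        add_zero, zero_add, smul_smul, vu, uv, v_mul_diag, diag_mul_u, reduceIte,
        Matrix.diagonal_mul_diagonal]
      match_scalars
      · ring
    · simp only [hE1, Matrix.neg_mul, Matrix.mul_neg, Matrix.smul_mul, Matrix.mul_smul,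
        Matrix.mul_one, Matrix.one_mul, Matrix.mul_zero, Matrix.zero_mul, smul_zero,
        add_zero, zero_add, smul_smul, vu, uv, v_mul_diag, diag_mul_u, reduceIte,
        Matrix.diagonal_mul_diagonal]
      match_scalars
      · ring
    · simp only [hE1, Matrix.neg_mul, Matrix.mul_neg, Matrix.smul_mul, Matrix.mul_smul,
        Matrix.mul_one, Matrix.one_mul, Matrix.mul_zero, Matrix.zero_mul, smul_zero,
        add_zero, zero_add, smul_smul, vu, uv, v_mul_diag, diag_mul_u, reduceIte,
        Matrix.diagonal_mul_diagonal, neg_neg, neg_mul, mul_neg,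
        ← Matrix.diagonal_smul, Matrix.diagonal_add, ← Matrix.diagonal_one]
      apply congrArg Matrix.diagonal
      funext k
      by_cases hk : k = 0 <;> simp [hk]
      · linear_combination hH1
  have hQ₁U : Q₁ᴴ * Q₁ = 1 := by
    rw [hQ₁H, hQ₁def, Matrix.fromBlocks_multiply, ← Matrix.fromBlocks_one,
      Matrix.fromBlocks_inj]
    refine ⟨?_, ?_, ?_, ?_⟩
    · simp only [hF1, Matrix.neg_mul, Matrix.mul_neg, Matrix.smul_mul, Matrix.mul_smul,
        Matrix.mul_one, Matrix.one_mul, Matrix.mul_zero, Matrix.zero_mul, smul_zero,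
        add_zero, zero_add, smul_smul, vu, uv, v_mul_diag, diag_mul_u, reduceIte,
        Matrix.diagonal_mul_diagonal]
      match_scalars
      · field_simp
        linear_combination hH2
    · simp only [hF1, Matrix.neg_mul, Matrix.mul_neg, Matrix.smul_mul, Matrix.mul_smul,
        Matrix.mul_one, Matrix.one_mul, Matrix.mul_zero, Matrix.zero_mul, smul_zero,
        add_zero, zero_add, smul_smul, vu, uv, v_mul_diag, diag_mul_u, reduceIte,
        Matrix.diagonal_mul_diagonal]
      match_scalars
      · ring
    · simp only [hF1, Matrix.neg_mul, Matrix.mul_neg, Matrix.smul_mul, Matrix.mul_smul,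
        Matrix.mul_one, Matrix.one_mul, Matrix.mul_zero, Matrix.zero_mul, smul_zero,
        add_zero, zero_add, smul_smul, vu, uv, v_mul_diag, diag_mul_u, reduceIte,
        Matrix.diagonal_mul_diagonal]
      match_scalars
      · ring
    · simp only [hF1, Matrix.neg_mul, Matrix.mul_neg, Matrix.smul_mul, Matrix.mul_smul,
        Matrix.mul_one, Matrix.one_mul, Matrix.mul_zero, Matrix.zero_mul, smul_zero,
        add_zero, zero_add, smul_smul, vu, uv, v_mul_diag, diag_mul_u, reduceIte,
        Matrix.diagonal_mul_diagonal, neg_neg, neg_mul, mul_neg,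
        ← Matrix.diagonal_smul, Matrix.diagonal_add, ← Matrix.diagonal_one]
      apply congrArg Matrix.diagonal
      funext k
      by_cases hk : k = 0 <;> simp [hk]
      · field_simp
        linear_combination hH2
  have hMain : Matrix.diagonal (Sum.elim (fun _ => (a:ℂ)) (fun k => (d' k : ℂ))) * S₁
      = Q₁ * T₁ := by
    rw [← Matrix.fromBlocks_diagonal, hS₁def, hQ₁def, hT₁def,
      Matrix.fromBlocks_multiply, Matrix.fromBlocks_multiply, Matrix.fromBlocks_inj]
    refine ⟨?_, ?_, ?_, ?_⟩
    · simp only [hE1, hF1, hDd, diag_one_const, Matrix.neg_mul, Matrix.mul_neg,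
        Matrix.smul_mul, Matrix.mul_smul, Matrix.mul_one, Matrix.one_mul, Matrix.mul_zero,
        Matrix.zero_mul, smul_zero, add_zero, zero_add, smul_smul, vu, uv, v_mul_diag,
        diag_mul_u, reduceIte, Matrix.diagonal_mul_diagonal]
      match_scalars
      · field_simp
    · simp only [hE1, hF1, hDd, diag_one_const, Matrix.neg_mul, Matrix.mul_neg,
        Matrix.smul_mul, Matrix.mul_smul, Matrix.mul_one, Matrix.one_mul, Matrix.mul_zero,
        Matrix.zero_mul, smul_zero, add_zero, zero_add, smul_smul, vu, uv, v_mul_diag,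
        diag_mul_u, reduceIte, Matrix.diagonal_mul_diagonal]
      match_scalars
      · field_simp
        linear_combination ((a:ℂ)*(si:ℂ))*hH2 + (-(a:ℂ)*(si:ℂ)*(b:ℂ)^2)*hH1
    · simp only [hE1, hF1, hDd, diag_one_const, Matrix.neg_mul, Matrix.mul_neg,
        Matrix.smul_mul, Matrix.mul_smul, Matrix.mul_one, Matrix.one_mul, Matrix.mul_zero,
        Matrix.zero_mul, smul_zero, add_zero, zero_add, smul_smul, vu, uv, v_mul_diag,
        diag_mul_u, reduceIte, Matrix.diagonal_mul_diagonal]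
      match_scalars
      · rw [← hbdef]
        field_simp
    · simp only [hE1, hF1, hDd, diag_one_const, Matrix.neg_mul, Matrix.mul_neg,
        Matrix.smul_mul, Matrix.mul_smul, Matrix.mul_one, Matrix.one_mul, Matrix.mul_zero,
        Matrix.zero_mul, smul_zero, add_zero, zero_add, smul_smul, vu, uv, v_mul_diag,
        diag_mul_u, reduceIte, Matrix.diagonal_mul_diagonal,
        ← Matrix.diagonal_smul, Matrix.diagonal_add]
      apply congrArg Matrix.diagonal
      funext k
      by_cases hk : k = 0 <;> simp [hk]
      · rw [← hbdef]
        field_simp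
        linear_combination (-(b:ℂ)*(co:ℂ))*hH2 + (((a:ℂ)^2*(b:ℂ)*(co:ℂ)))*hH1
  -- assemble
  have hT2 : T₁ * Matrix.fromBlocks 1 0 0 S'
      = Matrix.fromBlocks 1 0 0 Q' *
        Matrix.fromBlocks ((c:ℂ) • 1)
          (((((b:ℂ)^2-(a:ℂ)^2)*(si:ℂ)*(co:ℂ)/(c:ℂ)) • (uCol m)ᴴ) * S') 0 R' := by
    rw [hT₁def, Matrix.fromBlocks_multiply, Matrix.fromBlocks_multiply,
      Matrix.fromBlocks_inj]
    refine ⟨by simp, by simp, by simp, by simp [hEq']⟩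
  refine ⟨S₁ * Matrix.fromBlocks 1 0 0 S', Q₁ * Matrix.fromBlocks 1 0 0 Q',
    ((((b:ℂ)^2-(a:ℂ)^2)*(si:ℂ)*(co:ℂ)/(c:ℂ)) • (uCol m)ᴴ) * S', ?_, ?_, ?_⟩
  · rw [Matrix.conjTranspose_mul, Matrix.mul_assoc, ← Matrix.mul_assoc S₁ᴴ, hS₁U,
      Matrix.one_mul, Matrix.fromBlocks_conjTranspose, Matrix.fromBlocks_multiply]
    simp [hS', Matrix.fromBlocks_one]
  · rw [Matrix.conjTranspose_mul, Matrix.mul_assoc, ← Matrix.mul_assoc Q₁ᴴ, hQ₁U,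
      Matrix.one_mul, Matrix.fromBlocks_conjTranspose, Matrix.fromBlocks_multiply]
    simp [hQ', Matrix.fromBlocks_one]
  · rw [← Matrix.mul_assoc, hMain, Matrix.mul_assoc, hT2, ← Matrix.mul_assoc]


lemma key (n : ℕ) : ∀ (d : Fin n → ℝ), (∀ i, 0 < d i) → ∀ c : ℝ, 0 < c →
    (∏ i, d i) = c ^ n →
    ∃ S Q R : Matrix (Fin n) (Fin n) ℂ, Sᴴ * S = 1 ∧ Qᴴ * Q = 1 ∧
      (∀ i j, j < i → R i j = 0) ∧ (∀ i, R i i = (c : ℂ)) ∧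
      Matrix.diagonal (fun i => (d i : ℂ)) * S = Q * R := by
  induction n with
  | zero =>
      intro d _ c _ _
      refine ⟨1, 1, 1, by simp, by simp, fun i => i.elim0, fun i => i.elim0, ?_⟩
      ext i j
      exact i.elim0
  | succ n IH =>
      cases n with
      | zero =>
          intro d hd c hc hprod
          have hd0 : d 0 = c := by simpa using hprod
          refine ⟨1, 1, Matrix.diagonal (fun _ => (c:ℂ)), by simp, by simp, ?_, ?_, ?_⟩
          · intro i j hji
            rw [Fin.lt_def] at hji
            omega
          · intro i
            simp
          · rw [Matrix.mul_one, Matrix.one_mul]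
            apply congrArg Matrix.diagonal
            funext i
            rw [Fin.eq_zero i, hd0]
      | succ m =>
          intro d hd c hc hprod
          -- find indices i ≠ j with d i ≤ c ≤ d j
          obtain ⟨i, j, hij, hic, hcj⟩ :
              ∃ i j : Fin (m+2), i ≠ j ∧ d i ≤ c ∧ c ≤ d j := by
            obtain ⟨i0, -, hi0⟩ :=
              Finset.exists_min_image Finset.univ d ⟨0, Finset.mem_univ 0⟩
            obtain ⟨j0, -, hj0⟩ :=
              Finset.exists_max_image Finset.univ d ⟨0, Finset.mem_univ 0⟩
            have hi0c : d i0 ≤ c := by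
              by_contra h
              push_neg at h
              have h1 : c ^ (m+2) < d i0 ^ (m+2) :=
                pow_lt_pow_left₀ h hc.le (by omega)
              have h2 : d i0 ^ (m+2) ≤ ∏ k, d k := by
                calc d i0 ^ (m+2) = ∏ _k : Fin (m+2), d i0 := by
                      rw [Finset.prod_const, Finset.card_univ, Fintype.card_fin]
                  _ ≤ ∏ k, d k :=
                      Finset.prod_le_prod (fun k _ => (hd i0).le)
                        (fun k _ => hi0 k (Finset.mem_univ k))
              rw [hprod] at h2
              linarith
            have hj0c : c ≤ d j0 := by
              by_contra h
              push_neg at h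
              have h1 : d j0 ^ (m+2) < c ^ (m+2) :=
                pow_lt_pow_left₀ h (hd j0).le (by omega)
              have h2 : ∏ k, d k ≤ d j0 ^ (m+2) := by
                calc ∏ k, d k ≤ ∏ _k : Fin (m+2), d j0 :=
                      Finset.prod_le_prod (fun k _ => (hd k).le)
                        (fun k _ => hj0 k (Finset.mem_univ k))
                  _ = d j0 ^ (m+2) := by
                      rw [Finset.prod_const, Finset.card_univ, Fintype.card_fin]
              rw [hprod] at h2
              linarith
            by_cases hij0 : i0 = j0
            · have hall : d 0 ≤ c ∧ c ≤ d 1 := by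
                constructor
                · calc d 0 ≤ d j0 := hj0 0 (Finset.mem_univ 0)
                    _ = d i0 := by rw [hij0]
                    _ ≤ c := hi0c
                · calc c ≤ d j0 := hj0c
                    _ = d i0 := by rw [hij0]
                    _ ≤ d 1 := hi0 1 (Finset.mem_univ 1)
              exact ⟨0, 1, by simp [Fin.ext_iff], hall.1, hall.2⟩
            · exact ⟨i0, j0, hij0, hi0c, hj0c⟩
          -- a permutation moving 0 ↦ i, 1 ↦ j
          obtain ⟨π, hπ0, hπ1⟩ :
              ∃ π : Equiv.Perm (Fin (m+2)), π 0 = i ∧ π 1 = j := by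
            refine ⟨(Equiv.swap 1 ((Equiv.swap 0 i) j)).trans (Equiv.swap 0 i), ?_, ?_⟩
            · have h0j' : (0 : Fin (m+2)) ≠ (Equiv.swap 0 i) j := by
                intro h
                have := congrArg (Equiv.swap 0 i) h
                rw [Equiv.swap_apply_left, Equiv.swap_apply_self] at this
                exact hij this
              have h01 : (0 : Fin (m+2)) ≠ 1 := by simp [Fin.ext_iff]
              simp only [Equiv.trans_apply]
              rw [Equiv.swap_apply_of_ne_of_ne h01 h0j', Equiv.swap_apply_left]
            · simp only [Equiv.trans_apply]
              rw [Equiv.swap_apply_left, Equiv.swap_apply_self]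
          set d₁ : Fin (m+2) → ℝ := fun x => d (π x) with hd₁def
          have hd₁pos : ∀ x, 0 < d₁ x := fun x => hd (π x)
          have hd₁prod : ∏ x, d₁ x = c ^ (m+2) := by
            rw [hd₁def]
            rw [Equiv.prod_comp π d]
            exact hprod
          have hd₁0 : d₁ 0 ≤ c := by rw [hd₁def]; simpa [hπ0] using hic
          have hd₁1 : c ≤ d₁ 1 := by rw [hd₁def]; simpa [hπ1] using hcj
          suffices hmain : ∃ S Q R : Matrix (Fin (m+2)) (Fin (m+2)) ℂ,
              Sᴴ * S = 1 ∧ Qᴴ * Q = 1 ∧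
              (∀ i j, j < i → R i j = 0) ∧ (∀ i, R i i = (c : ℂ)) ∧
              Matrix.diagonal (fun i => (d₁ i : ℂ)) * S = Q * R by
            obtain ⟨S, Q, R, h1, h2, h3, h4, h5⟩ := hmain
            refine ⟨S.submatrix (⇑π.symm) _root_.id, Q.submatrix (⇑π.symm) _root_.id, R,
              ?_, ?_, h3, h4, ?_⟩
            · rw [Matrix.conjTranspose_submatrix, Matrix.submatrix_mul_equiv, h1, Matrix.submatrix_id_id]
            · rw [Matrix.conjTranspose_submatrix, Matrix.submatrix_mul_equiv, h2, Matrix.submatrix_id_id]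
            · have hdd : Matrix.diagonal (fun x => (d x : ℂ))
                  = (Matrix.diagonal fun x => (d₁ x : ℂ)).submatrix (⇑π.symm) (⇑π.symm) := by
                rw [Matrix.submatrix_diagonal_equiv]
                apply congrArg Matrix.diagonal
                funext x
                simp [hd₁def]
              rw [hdd, Matrix.submatrix_mul_equiv, h5]
              have := Matrix.submatrix_mul_equiv Q R (⇑π.symm) (Equiv.refl (Fin (m+2)))
                _root_.id
              simp only [Equiv.coe_refl, Matrix.submatrix_id_id] at this
              exact this.symm
          -- ordered case
          set d' : Fin (m+1) → ℝ := fun k => d₁ k.succ with hd'def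
          have hd'0 : d' 0 = d₁ 1 := by
            rw [hd'def]
            norm_num
          set d'' : Fin (m+1) → ℝ :=
            fun k => if k = 0 then d₁ 0 * d' 0 / c else d' k with hd''def
          have hd''pos : ∀ k, 0 < d'' k := by
            intro k
            rw [hd''def]
            dsimp only
            by_cases hk : k = 0
            · rw [if_pos hk, hd'0]
              exact div_pos (mul_pos (hd₁pos 0) (hd₁pos 1)) hc
            · rw [if_neg hk]
              exact hd₁pos k.succ
          have hd''prod : ∏ k, d'' k = c ^ (m+1) := by
            have e1 : ∏ k : Fin (m+2), d₁ k = d₁ 0 * ∏ k : Fin (m+1), d' k :=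
              Fin.prod_univ_succ _
            have e3 : ∏ k : Fin (m+1), d' k = d' 0 * ∏ k : Fin m, d' k.succ :=
              Fin.prod_univ_succ _
            have e2 : ∏ k : Fin (m+1), d'' k
                = (d₁ 0 * d' 0 / c) * ∏ k : Fin m, d'' k.succ :=
              Fin.prod_univ_succ _
            have e4 : ∏ k : Fin m, d'' k.succ = ∏ k : Fin m, d' k.succ :=
              Finset.prod_congr rfl fun k _ => by
                rw [hd''def]
                simp [Fin.succ_ne_zero]
            rw [e2, e4]
            rw [e1, e3] at hd₁prod
            have hP : d₁ 0 * (d' 0 * ∏ k : Fin m, d' k.succ) = c ^ (m+2) := hd₁prod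
            field_simp
            rw [← pow_succ']
            linear_combination hP
          obtain ⟨S', Q', R', hS', hQ', htri', hdiag', hEq''⟩ := IH d'' hd''pos c hc hd''prod
          have hEq' : Matrix.diagonal
              (fun k => if k = 0 then (d₁ 0 : ℂ) * (d' 0 : ℂ) / (c:ℂ) else (d' k : ℂ)) * S'
              = Q' * R' := by
            have : (fun k => if k = 0 then (d₁ 0 : ℂ) * (d' 0 : ℂ) / (c:ℂ) else (d' k : ℂ))
                = fun k => ((d'' k : ℝ) : ℂ) := by
              funext k
              rw [hd''def]
              by_cases hk : k = 0 <;> simp [hk]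
            rw [this]
            exact hEq''
          obtain ⟨S₀, Q₀, B, hS₀, hQ₀, hEq₀⟩ :=
            step_blocks m (d₁ 0) c d' (hd₁pos 0) hc (fun k => hd₁pos k.succ) hd₁0
              (hd'0 ▸ hd₁1) S' Q' R' hS' hQ' hEq'
          set e : Fin 1 ⊕ Fin (m+1) ≃ Fin (m+2) :=
            finSumFinEquiv.trans (finCongr (by omega)) with hedef
          have hEinl : ∀ x : Fin 1, e (Sum.inl x) = 0 := by
            intro x
            rw [hedef]
            simp [finSumFinEquiv, Fin.ext_iff]
          have hEinr : ∀ k : Fin (m+1), e (Sum.inr k) = k.succ := by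
            intro k
            rw [hedef]
            simp [finSumFinEquiv, Fin.ext_iff]
          refine ⟨S₀.submatrix ⇑e.symm ⇑e.symm, Q₀.submatrix ⇑e.symm ⇑e.symm,
            (Matrix.fromBlocks ((c:ℂ) • 1) B 0 R').submatrix ⇑e.symm ⇑e.symm,
            ?_, ?_, ?_, ?_, ?_⟩
          · rw [Matrix.conjTranspose_submatrix, Matrix.submatrix_mul_equiv, hS₀,
              Matrix.submatrix_one_equiv]
          · rw [Matrix.conjTranspose_submatrix, Matrix.submatrix_mul_equiv, hQ₀,
              Matrix.submatrix_one_equiv]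
          · -- lower triangular
            intro x y hyx
            rw [Matrix.submatrix_apply]
            rcases hx : e.symm x with x' | x' <;> rcases hy : e.symm y with y' | y'
            · have hxx : x = e (Sum.inl x') := by rw [← hx, Equiv.apply_symm_apply]
              have hyy : y = e (Sum.inl y') := by rw [← hy, Equiv.apply_symm_apply]
              rw [hEinl] at hxx hyy
              exfalso
              rw [hxx, hyy] at hyx
              exact lt_irrefl _ hyx
            · have hxx : x = e (Sum.inl x') := by rw [← hx, Equiv.apply_symm_apply]
              rw [hEinl] at hxx
              exfalso
              rw [hxx] at hyx
              exact Fin.not_lt_zero y hyx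
            · exact Matrix.fromBlocks_apply₂₁ _ _ _ _ x' y'
            · have hxx : x = e (Sum.inr x') := by rw [← hx, Equiv.apply_symm_apply]
              have hyy : y = e (Sum.inr y') := by rw [← hy, Equiv.apply_symm_apply]
              rw [hEinr] at hxx hyy
              have : y' < x' := by
                rw [hxx, hyy, Fin.succ_lt_succ_iff] at hyx
                exact hyx
              exact htri' x' y' this
          · -- diagonal entries
            intro x
            rw [Matrix.submatrix_apply]
            rcases hx : e.symm x with x' | x'
            · simp [Matrix.fromBlocks_apply₁₁, Matrix.smul_apply, Matrix.one_apply_eq]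
            · simpa [Matrix.fromBlocks_apply₂₂] using hdiag' x'
          · -- the product identity
            have hdd : Matrix.diagonal (fun x => (d₁ x : ℂ))
                = (Matrix.diagonal
                    (Sum.elim (fun _ : Fin 1 => (d₁ 0 : ℂ)) (fun k => (d' k : ℂ)))).submatrix
                    ⇑e.symm ⇑e.symm := by
              rw [Matrix.submatrix_diagonal_equiv]
              apply congrArg Matrix.diagonal
              funext x
              simp only [Function.comp_apply]
              rcases hx : e.symm x with x' | x'
              · have hxx : x = e (Sum.inl x') := by rw [← hx, Equiv.apply_symm_apply]
                rw [hEinl] at hxx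
                simp only [Sum.elim_inl]
                rw [hxx]
              · have hxx : x = e (Sum.inr x') := by rw [← hx, Equiv.apply_symm_apply]
                rw [hEinr] at hxx
                simp only [Sum.elim_inr]
                rw [hxx]
            rw [hdd, Matrix.submatrix_mul_equiv, hEq₀]
            exact (Matrix.submatrix_mul_equiv Q₀
              (Matrix.fromBlocks ((c:ℂ) • 1) B 0 R') (⇑e.symm) e.symm (⇑e.symm)).symm


/-- Equal-diagonal R-factor lemma: for a nonsingular diagonal `Γ` there exists a
unitary `S` such that `Γ S = Q R` with `Q` unitary and `R` upper triangular with all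
diagonal entries equal to `(∏ k |γ_k|)^(1/M)`. -/
theorem stmt2 (M : ℕ) (hM : 0 < M) (γ : Fin M → ℂ) (hγ : ∀ k, γ k ≠ 0) :
    ∃ S Q R : Matrix (Fin M) (Fin M) ℂ,
      Sᴴ * S = 1 ∧ Qᴴ * Q = 1 ∧
      (∀ i j : Fin M, j < i → R i j = 0) ∧
      (∀ i : Fin M, R i i = (((∏ k, ‖γ k‖) ^ ((1:ℝ)/M) : ℝ) : ℂ)) ∧
      Matrix.diagonal γ * S = Q * R := by
  have hapos : ∀ k, 0 < ‖γ k‖ := fun k => norm_pos_iff.mpr (hγ k)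
  set c : ℝ := (∏ k, ‖γ k‖) ^ ((1:ℝ)/M) with hcdef
  have hprodpos : 0 < ∏ k, ‖γ k‖ :=
    Finset.prod_pos (fun k _ => hapos k)
  have hc : 0 < c := Real.rpow_pos_of_pos hprodpos _
  have hMR : ((M:ℝ)) ≠ 0 := by exact_mod_cast hM.ne'
  have hcM : ∏ k, ‖γ k‖ = c ^ M := by
    rw [hcdef, ← Real.rpow_natCast ((∏ k, ‖γ k‖) ^ ((1:ℝ)/M)) M,
      ← Real.rpow_mul hprodpos.le, one_div, inv_mul_cancel₀ hMR, Real.rpow_one]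
  obtain ⟨S, Q, R, hS, hQ, htri, hdiag, hEq⟩ :=
    key M (fun k => ‖γ k‖) hapos c hc hcM
  set p : Fin M → ℂ := fun k => γ k / (‖γ k‖ : ℂ) with hpdef
  have hU : (Matrix.diagonal p)ᴴ * Matrix.diagonal p = 1 := by
    rw [Matrix.diagonal_conjTranspose, Matrix.diagonal_mul_diagonal, ← Matrix.diagonal_one]
    apply congrArg Matrix.diagonal
    funext k
    have habs : ‖p k‖ = 1 := by
      rw [hpdef]
      simp only [norm_div, Complex.norm_real, norm_norm]
      exact div_self (hapos k).ne'
    have := Complex.normSq_eq_norm_sq (p k)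
    rw [habs] at this
    simp only [Pi.star_apply, Pi.one_apply]
    rw [Complex.star_def, mul_comm, Complex.mul_conj, this]
    norm_num
  refine ⟨S, Matrix.diagonal p * Q, R, hS, ?_, htri, hdiag, ?_⟩
  · rw [Matrix.conjTranspose_mul, Matrix.mul_assoc, ← Matrix.mul_assoc (Matrix.diagonal p)ᴴ,
      hU, Matrix.one_mul, hQ]
  · have hsplit : Matrix.diagonal γ
        = Matrix.diagonal p * Matrix.diagonal (fun k => (‖γ k‖ : ℂ)) := by
      rw [Matrix.diagonal_mul_diagonal]
      apply congrArg Matrix.diagonal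
      funext k
      rw [hpdef]
      exact (div_mul_cancel₀ (γ k) (by exact_mod_cast (hapos k).ne')).symm
    rw [hsplit, Matrix.mul_assoc, hEq, ← Matrix.mul_assoc]

end
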